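/- For sequential Gibbs sampling on a distribution π with total influence α < 1 over n variables, there exists a coupling (X_t, Y_t) of the chains from any pair of initial states such that for every variable i and time t, P(X_{i,t} ≠ Y_{i,t}) ≤ exp(−(1−α)t/n). -/

import Mathlib

noncomputable def tvDist {Ω : Type*} [Fintype Ω] (μ ν : Ω → ℝ) : ℝ :=
  ⨆ A : Finset Ω, |∑ x ∈ A, μ x - ∑ x ∈ A, ν x|

def IsDist {Ω : Type*} [Fintype Ω] (μ : Ω → ℝ) : Prop :=
  (∀ x, 0 ≤ μ x) ∧ ∑ x, μ x = 1

noncomputable def condDist {I S : Type*} [Fintype I] [Fintype S] [DecidableEq I]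
    (π : (I → S) → ℝ) (i : I) (x : I → S) : S → ℝ :=
  fun s => π (Function.update x i s) / ∑ s' : S, π (Function.update x i s')

noncomputable def totalInfluence {I S : Type*} [Fintype I] [Fintype S] [DecidableEq I]
    (π : (I → S) → ℝ) : ℝ :=
  ⨆ i : I, ∑ j : I,
    ⨆ p : {p : (I → S) × (I → S) // ∀ k, k ≠ j → p.1 k = p.2 k},
      tvDist (condDist π i p.1.1) (condDist π i p.1.2)

/-- The transition kernel of sequential Gibbs sampling: pick a uniformly random
variable and resample it from its conditional distribution. -/
noncomputable def gibbsKernel {I S : Type*} [Fintype I] [Fintype S]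
    [DecidableEq I] [DecidableEq S] (π : (I → S) → ℝ) (x y : I → S) : ℝ :=
  (Fintype.card I : ℝ)⁻¹ *
    ∑ i : I, if ∀ j, j ≠ i → y j = x j then condDist π i x (y i) else 0

noncomputable def evolve {Ω : Type*} [Fintype Ω] (K : Ω → Ω → ℝ) (μ : Ω → ℝ) : Ω → ℝ :=
  fun y => ∑ x, μ x * K x y

def marg1 {Ω₁ Ω₂ : Type*} [Fintype Ω₂] (q : Ω₁ × Ω₂ → ℝ) : Ω₁ → ℝ := fun a => ∑ b, q (a, b)
def marg2 {Ω₁ Ω₂ : Type*} [Fintype Ω₁] (q : Ω₁ × Ω₂ → ℝ) : Ω₂ → ℝ := fun b => ∑ a, q (a, b)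

/-- A coupling of two copies of the Markov chain with kernel `K`, started at the
states `x0` and `y0`: a joint process whose marginals each evolve according to `K`. -/
def IsChainCoupling {Ω : Type*} [Fintype Ω] [DecidableEq Ω]
    (K : Ω → Ω → ℝ) (x0 y0 : Ω) (q : ℕ → Ω × Ω → ℝ) : Prop :=
  (∀ t z, 0 ≤ q t z) ∧ (∀ t, ∑ z, q t z = 1) ∧
  (q 0 = fun z => if z = (x0, y0) then 1 else 0) ∧
  (∀ t, marg1 (q (t + 1)) = evolve K (marg1 (q t))) ∧
  (∀ t, marg2 (q (t + 1)) = evolve K (marg2 (q t)))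

set_option linter.unusedSectionVars false

section TV

variable {Ω : Type*} [Fintype Ω]

lemma abs_sub_sum_le_tvDist (μ ν : Ω → ℝ) (A : Finset Ω) :
    |∑ x ∈ A, μ x - ∑ x ∈ A, ν x| ≤ tvDist μ ν := by
  exact le_ciSup (Set.Finite.bddAbove (Set.finite_range
    (fun B : Finset Ω => |∑ x ∈ B, μ x - ∑ x ∈ B, ν x|))) A

lemma tvDist_nonneg (μ ν : Ω → ℝ) : 0 ≤ tvDist μ ν :=
  le_trans (by simp) (abs_sub_sum_le_tvDist μ ν ∅)

lemma tvDist_le {μ ν : Ω → ℝ} {c : ℝ}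
    (h : ∀ A : Finset Ω, |∑ x ∈ A, μ x - ∑ x ∈ A, ν x| ≤ c) :
    tvDist μ ν ≤ c := ciSup_le h

lemma tvDist_triangle (μ ν ρ : Ω → ℝ) : tvDist μ ρ ≤ tvDist μ ν + tvDist ν ρ := by
  apply tvDist_le
  intro A
  calc |∑ x ∈ A, μ x - ∑ x ∈ A, ρ x|
      ≤ |∑ x ∈ A, μ x - ∑ x ∈ A, ν x| + |∑ x ∈ A, ν x - ∑ x ∈ A, ρ x| := abs_sub_le _ _ _
    _ ≤ tvDist μ ν + tvDist ν ρ :=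
        add_le_add (abs_sub_sum_le_tvDist _ _ _) (abs_sub_sum_le_tvDist _ _ _)

lemma tvDist_self (μ : Ω → ℝ) : tvDist μ μ = 0 :=
  le_antisymm (tvDist_le fun A => by simp) (tvDist_nonneg μ μ)

end TV

section MC
variable {S : Type*} [Fintype S] [DecidableEq S]

noncomputable def Ddef (μ ν : S → ℝ) : ℝ := ∑ s, (μ s - min (μ s) (ν s))

noncomputable def mcpl (μ ν : S → ℝ) : S × S → ℝ := fun p =>
  (if p.1 = p.2 then min (μ p.1) (ν p.1) else 0) +
  (if Ddef μ ν = 0 then 0 else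
    (μ p.1 - min (μ p.1) (ν p.1)) * (ν p.2 - min (μ p.2) (ν p.2)) / Ddef μ ν)


variable {μ ν : S → ℝ}

lemma Ddef_nonneg : 0 ≤ Ddef μ ν :=
  Finset.sum_nonneg fun s _ => by simp [min_le_left]

lemma Ddef_symm' (hμ : IsDist μ) (hν : IsDist ν) :
    Ddef μ ν = ∑ s, (ν s - min (μ s) (ν s)) := by
  unfold Ddef
  rw [Finset.sum_sub_distrib, Finset.sum_sub_distrib, hμ.2, hν.2]

lemma Ddef_eq_zero_mu (h : Ddef μ ν = 0) : ∀ s, min (μ s) (ν s) = μ s := by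
  intro s
  have := (Finset.sum_eq_zero_iff_of_nonneg (fun s _ => by simp [min_le_left] : ∀ s ∈ Finset.univ, (0:ℝ) ≤ μ s - min (μ s) (ν s))).mp h s (Finset.mem_univ s)
  linarith

lemma Ddef_eq_zero_nu (hμ : IsDist μ) (hν : IsDist ν) (h : Ddef μ ν = 0) :
    ∀ s, min (μ s) (ν s) = ν s := by
  intro s
  have h2 : ∑ s, (ν s - min (μ s) (ν s)) = 0 := by rw [← Ddef_symm' hμ hν]; exact h
  have := (Finset.sum_eq_zero_iff_of_nonneg
    (fun s _ => by simp [min_le_right] : ∀ s ∈ Finset.univ, (0:ℝ) ≤ ν s - min (μ s) (ν s))).mp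
    h2 s (Finset.mem_univ s)
  linarith

lemma mcpl_nonneg (hμ : IsDist μ) (hν : IsDist ν) (p : S × S) : 0 ≤ mcpl μ ν p := by
  unfold mcpl
  apply add_nonneg
  · split
    · exact le_min (hμ.1 _) (hν.1 _)
    · exact le_refl 0
  · split
    · exact le_refl 0
    · exact div_nonneg (mul_nonneg (by simp [min_le_left]) (by simp [min_le_right])) Ddef_nonneg

lemma mcpl_marg1 (hμ : IsDist μ) (hν : IsDist ν) (s : S) :
    ∑ s', mcpl μ ν (s, s') = μ s := by
  unfold mcpl
  rw [Finset.sum_add_distrib]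
  rw [Finset.sum_ite_eq Finset.univ s (fun s' => min (μ s) (ν s))]
  simp only [Finset.mem_univ, if_true]
  by_cases hD : Ddef μ ν = 0
  · simp [hD, Ddef_eq_zero_mu hD s]
  · simp only [hD, if_false]
    rw [← Finset.sum_div, ← Finset.mul_sum, ← Ddef_symm' hμ hν]
    field_simp
    ring

lemma mcpl_marg2 (hμ : IsDist μ) (hν : IsDist ν) (s' : S) :
    ∑ s, mcpl μ ν (s, s') = ν s' := by
  unfold mcpl
  rw [Finset.sum_add_distrib]
  rw [Finset.sum_ite_eq' Finset.univ s' (fun s => min (μ s) (ν s))]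
  simp only [Finset.mem_univ, if_true]
  by_cases hD : Ddef μ ν = 0
  · simp [hD, Ddef_eq_zero_nu hμ hν hD s']
  · simp only [hD, if_false]
    have : ∑ s, (μ s - min (μ s) (ν s)) * (ν s' - min (μ s') (ν s')) / Ddef μ ν
        = (∑ s, (μ s - min (μ s) (ν s))) * (ν s' - min (μ s') (ν s')) / Ddef μ ν := by
      rw [Finset.sum_mul, Finset.sum_div]
    rw [this]
    have hd : (∑ s, (μ s - min (μ s) (ν s))) = Ddef μ ν := rfl
    rw [hd]
    field_simp
    ring

lemma mcpl_offdiag_le (hμ : IsDist μ) (hν : IsDist ν) :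
    ∑ p ∈ Finset.univ.filter (fun p : S × S => p.1 ≠ p.2), mcpl μ ν p ≤ Ddef μ ν := by
  have key : ∀ p ∈ Finset.univ.filter (fun p : S × S => p.1 ≠ p.2),
      mcpl μ ν p = (if Ddef μ ν = 0 then 0 else
        (μ p.1 - min (μ p.1) (ν p.1)) * (ν p.2 - min (μ p.2) (ν p.2)) / Ddef μ ν) := by
    intro p hp
    simp only [Finset.mem_filter] at hp
    unfold mcpl
    simp [hp.2]
  rw [Finset.sum_congr rfl key]
  have h2 : ∑ p ∈ Finset.univ.filter (fun p : S × S => p.1 ≠ p.2),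
      (if Ddef μ ν = 0 then 0 else
        (μ p.1 - min (μ p.1) (ν p.1)) * (ν p.2 - min (μ p.2) (ν p.2)) / Ddef μ ν)
      ≤ ∑ p : S × S, (if Ddef μ ν = 0 then 0 else
        (μ p.1 - min (μ p.1) (ν p.1)) * (ν p.2 - min (μ p.2) (ν p.2)) / Ddef μ ν) := by
    apply Finset.sum_le_sum_of_subset_of_nonneg (Finset.filter_subset _ _)
    intro p _ _
    split
    · exact le_refl 0
    · exact div_nonneg (mul_nonneg (by simp [min_le_left]) (by simp [min_le_right])) Ddef_nonneg
  refine h2.trans ?_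
  by_cases hD : Ddef μ ν = 0
  · simp [hD]
  · simp only [hD, if_false]
    rw [Fintype.sum_prod_type]
    have : ∀ s : S, ∑ s' : S, (μ s - min (μ s) (ν s)) * (ν s' - min (μ s') (ν s')) / Ddef μ ν
        = (μ s - min (μ s) (ν s)) * (∑ s', (ν s' - min (μ s') (ν s'))) / Ddef μ ν := by
      intro s; rw [Finset.mul_sum, Finset.sum_div]
    rw [Finset.sum_congr rfl (fun s _ => this s), ← Ddef_symm' hμ hν, ← Finset.sum_div,
      ← Finset.sum_mul]
    have hd : (∑ s, (μ s - min (μ s) (ν s))) = Ddef μ ν := rfl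
    rw [hd]
    field_simp
    exact le_rfl

lemma Ddef_le_tvDist : Ddef μ ν ≤ tvDist μ ν := by
  have h1 : Ddef μ ν = ∑ s, (if ν s < μ s then μ s - ν s else 0) := by
    apply Finset.sum_congr rfl
    intro s _
    by_cases h : ν s < μ s
    · simp [h, min_eq_right h.le]
    · simp [h, min_eq_left (not_lt.mp h)]
  have h2 : Ddef μ ν = ∑ s ∈ Finset.univ.filter (fun s => ν s < μ s), (μ s - ν s) := by
    rw [h1, Finset.sum_filter]
  rw [h2, Finset.sum_sub_distrib]
  exact (le_abs_self _).trans (abs_sub_sum_le_tvDist μ ν _)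

end MC

section Path
variable {n : ℕ} {S : Type*} [Fintype S] [DecidableEq S] {Ω : Type*} [Fintype Ω]

lemma tvDist_path_le (f : (Fin n → S) → Ω → ℝ) (β : Fin n → ℝ)
    (hβ : ∀ j (u v : Fin n → S), (∀ k, k ≠ j → u k = v k) → tvDist (f u) (f v) ≤ β j)
    (x y : Fin n → S) :
    tvDist (f x) (f y) ≤ ∑ j ∈ Finset.univ.filter (fun j => x j ≠ y j), β j := by
  have aux : ∀ T : Finset (Fin n),
      tvDist (f x) (f (fun j => if j ∈ T then y j else x j)) ≤ ∑ j ∈ T, β j := by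
    intro T
    induction T using Finset.induction_on with
    | empty =>
      have hx : (fun j => if j ∈ (∅ : Finset (Fin n)) then y j else x j) = x := by
        funext j; simp
      rw [hx, tvDist_self]
      simp
    | @insert a s ha ih =>
      calc tvDist (f x) (f (fun j => if j ∈ insert a s then y j else x j))
          ≤ tvDist (f x) (f (fun j => if j ∈ s then y j else x j)) +
            tvDist (f (fun j => if j ∈ s then y j else x j))
              (f (fun j => if j ∈ insert a s then y j else x j)) := tvDist_triangle _ _ _
        _ ≤ (∑ j ∈ s, β j) + β a := by
            apply add_le_add ih
            apply hβ a
            intro k hk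
            simp [Finset.mem_insert, hk]
        _ = ∑ j ∈ insert a s, β j := by rw [Finset.sum_insert ha]; ring
  have hy : (fun j => if j ∈ Finset.univ.filter (fun j => x j ≠ y j) then y j else x j) = y := by
    funext j
    by_cases h : x j = y j <;> simp [h]
  have := aux (Finset.univ.filter (fun j => x j ≠ y j))
  rwa [hy] at this

end Path

section OffCoord
variable {n : ℕ} {S : Type*} [Fintype S] [DecidableEq S]

lemma sum_off_coord (y : Fin n → S) (i : Fin n) (g : (Fin n → S) → ℝ) :
    ∑ y' : Fin n → S, (if (∀ j, j ≠ i → y' j = y j) then g y' else 0)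
      = ∑ s : S, g (Function.update y i s) := by
  have term : ∀ y' : Fin n → S, (if (∀ j, j ≠ i → y' j = y j) then g y' else 0)
      = ∑ s : S, (if y' = Function.update y i s then g y' else 0) := by
    intro y'
    by_cases h : ∀ j, j ≠ i → y' j = y j
    · rw [if_pos h]
      have hself : y' = Function.update y i (y' i) := by
        funext j
        by_cases hj : j = i
        · subst hj; simp
        · simp [Function.update_of_ne hj, h j hj]
      have : ∀ s, (if y' = Function.update y i s then g y' else 0)
          = (if s = y' i then g y' else 0) := by
        intro s
        congr 1
        apply propext
        constructor
        · intro he; rw [he]; simp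
        · intro he; rw [he]; exact hself
      rw [Finset.sum_congr rfl (fun s _ => this s),
        Finset.sum_ite_eq' Finset.univ (y' i) (fun _ => g y')]
      simp
    · rw [if_neg h]
      push_neg at h
      obtain ⟨j, hj, hne⟩ := h
      have : ∀ s ∈ Finset.univ, (if y' = Function.update y i s then g y' else 0) = 0 := by
        intro s _
        have : y' ≠ Function.update y i s := by
          intro he
          apply hne
          rw [he, Function.update_of_ne hj]
        simp [this]
      rw [Finset.sum_congr rfl this]
      simp
  rw [Finset.sum_congr rfl (fun y' _ => term y')]
  rw [Finset.sum_comm]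
  apply Finset.sum_congr rfl
  intro s _
  rw [Finset.sum_ite_eq' Finset.univ (Function.update y i s) g]
  simp

end OffCoord

section Main
variable {n : ℕ} {S : Type*} [Fintype S] [DecidableEq S]

/-- Influence of coordinate `j` on coordinate `i`. -/
noncomputable def infl (π : (Fin n → S) → ℝ) (i j : Fin n) : ℝ :=
  ⨆ p : {p : (Fin n → S) × (Fin n → S) // ∀ k, k ≠ j → p.1 k = p.2 k},
    tvDist (condDist π i p.1.1) (condDist π i p.1.2)

lemma tvDist_le_infl (π : (Fin n → S) → ℝ) (i j : Fin n) {u v : Fin n → S}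
    (h : ∀ k, k ≠ j → u k = v k) :
    tvDist (condDist π i u) (condDist π i v) ≤ infl π i j := by
  exact le_ciSup (Set.Finite.bddAbove (Set.finite_range
    (fun p : {p : (Fin n → S) × (Fin n → S) // ∀ k, k ≠ j → p.1 k = p.2 k} =>
      tvDist (condDist π i p.1.1) (condDist π i p.1.2)))) ⟨(u, v), h⟩

lemma infl_nonneg [Nonempty S] (π : (Fin n → S) → ℝ) (i j : Fin n) : 0 ≤ infl π i j := by
  have u : Fin n → S := Classical.arbitrary _
  have h := tvDist_le_infl π i j (u := u) (v := u) (fun k _ => rfl)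
  rw [tvDist_self] at h
  exact h

lemma sum_infl_le (π : (Fin n → S) → ℝ) (i : Fin n) :
    ∑ j, infl π i j ≤ totalInfluence π := by
  unfold totalInfluence infl
  exact le_ciSup (Set.Finite.bddAbove (Set.finite_range
    (fun i : Fin n => ∑ j : Fin n,
      ⨆ p : {p : (Fin n → S) × (Fin n → S) // ∀ k, k ≠ j → p.1 k = p.2 k},
        tvDist (condDist π i p.1.1) (condDist π i p.1.2)))) i

lemma totalInfluence_nonneg [Nonempty S] (hn : 0 < n) (π : (Fin n → S) → ℝ) :
    0 ≤ totalInfluence π := by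
  have i : Fin n := ⟨0, hn⟩
  refine le_trans ?_ (sum_infl_le π i)
  exact Finset.sum_nonneg fun j _ => infl_nonneg π i j

lemma condDist_isDist [Nonempty S] {π : (Fin n → S) → ℝ} (hpos : ∀ x, 0 < π x)
    (i : Fin n) (x : Fin n → S) : IsDist (condDist π i x) := by
  have hden : 0 < ∑ s' : S, π (Function.update x i s') :=
    Finset.sum_pos (fun s _ => hpos _) Finset.univ_nonempty
  constructor
  · intro s
    exact div_nonneg (hpos _).le hden.le
  · unfold condDist
    rw [← Finset.sum_div, div_self hden.ne']

/-- The coupled Gibbs kernel: pick a random coordinate and resample both chains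
using the maximal coupling of the two conditional distributions. -/
noncomputable def cQ (π : (Fin n → S) → ℝ) :
    ((Fin n → S) × (Fin n → S)) → ((Fin n → S) × (Fin n → S)) → ℝ :=
  fun z z' => (n : ℝ)⁻¹ * ∑ i : Fin n,
    if (∀ j, j ≠ i → z'.1 j = z.1 j) ∧ (∀ j, j ≠ i → z'.2 j = z.2 j)
    then mcpl (condDist π i z.1) (condDist π i z.2) (z'.1 i, z'.2 i) else 0

/-- The coupled process. -/
noncomputable def cq (π : (Fin n → S) → ℝ) (x0 y0 : Fin n → S) :
    ℕ → ((Fin n → S) × (Fin n → S)) → ℝ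
  | 0 => fun z => if z = (x0, y0) then 1 else 0
  | (t+1) => evolve (cQ π) (cq π x0 y0 t)

variable [Nonempty S] {π : (Fin n → S) → ℝ}

lemma cQ_nonneg (hpos : ∀ x, 0 < π x) (z z' : (Fin n → S) × (Fin n → S)) :
    0 ≤ cQ π z z' := by
  unfold cQ
  apply mul_nonneg (by positivity)
  apply Finset.sum_nonneg
  intro i _
  split
  · exact mcpl_nonneg (condDist_isDist hpos i z.1) (condDist_isDist hpos i z.2) _
  · exact le_refl 0

lemma cQ_marg2 (hpos : ∀ x, 0 < π x) (x y x' : Fin n → S) :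
    ∑ y' : Fin n → S, cQ π (x, y) (x', y') = gibbsKernel π x x' := by
  unfold cQ gibbsKernel
  rw [← Finset.mul_sum, Finset.sum_comm, Fintype.card_fin]
  congr 1
  apply Finset.sum_congr rfl
  intro i _
  by_cases hc1 : ∀ j, j ≠ i → x' j = x j
  · rw [if_pos hc1]
    have e1 : ∀ y' : Fin n → S,
        (if (∀ j, j ≠ i → x' j = x j) ∧ (∀ j, j ≠ i → y' j = y j)
          then mcpl (condDist π i x) (condDist π i y) (x' i, y' i) else 0)
        = (if (∀ j, j ≠ i → y' j = y j)
          then mcpl (condDist π i x) (condDist π i y) (x' i, y' i) else 0) := by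
      intro y'
      by_cases hc2 : ∀ j, j ≠ i → y' j = y j
      · rw [if_pos ⟨hc1, hc2⟩, if_pos hc2]
      · rw [if_neg (fun h => hc2 h.2), if_neg hc2]
    have e2 : (∑ y' : Fin n → S,
        if (∀ j, j ≠ i → x' j = x j) ∧ (∀ j, j ≠ i → y' j = y j)
          then mcpl (condDist π i x) (condDist π i y) (x' i, y' i) else 0)
        = ∑ s : S, mcpl (condDist π i x) (condDist π i y) (x' i, Function.update y i s i) := by
      rw [Finset.sum_congr rfl (fun y' _ => e1 y')]
      exact sum_off_coord y i (fun y' => mcpl (condDist π i x) (condDist π i y) (x' i, y' i))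
    rw [e2]
    have e3 : ∀ s : S, mcpl (condDist π i x) (condDist π i y) (x' i, Function.update y i s i)
        = mcpl (condDist π i x) (condDist π i y) (x' i, s) := by
      intro s; rw [Function.update_self]
    rw [Finset.sum_congr rfl (fun s _ => e3 s)]
    exact mcpl_marg1 (condDist_isDist hpos i x) (condDist_isDist hpos i y) (x' i)
  · rw [if_neg hc1]
    apply Finset.sum_eq_zero
    intro y' _
    simp [hc1]

lemma cQ_marg1' (hpos : ∀ x, 0 < π x) (x y y' : Fin n → S) :
    ∑ x' : Fin n → S, cQ π (x, y) (x', y') = gibbsKernel π y y' := by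
  unfold cQ gibbsKernel
  rw [← Finset.mul_sum, Finset.sum_comm, Fintype.card_fin]
  congr 1
  apply Finset.sum_congr rfl
  intro i _
  by_cases hc2 : ∀ j, j ≠ i → y' j = y j
  · rw [if_pos hc2]
    have e1 : ∀ x' : Fin n → S,
        (if (∀ j, j ≠ i → x' j = x j) ∧ (∀ j, j ≠ i → y' j = y j)
          then mcpl (condDist π i x) (condDist π i y) (x' i, y' i) else 0)
        = (if (∀ j, j ≠ i → x' j = x j)
          then mcpl (condDist π i x) (condDist π i y) (x' i, y' i) else 0) := by
      intro x'
      by_cases hc1 : ∀ j, j ≠ i → x' j = x j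
      · rw [if_pos ⟨hc1, hc2⟩, if_pos hc1]
      · rw [if_neg (fun h => hc1 h.1), if_neg hc1]
    have e2 : (∑ x' : Fin n → S,
        if (∀ j, j ≠ i → x' j = x j) ∧ (∀ j, j ≠ i → y' j = y j)
          then mcpl (condDist π i x) (condDist π i y) (x' i, y' i) else 0)
        = ∑ s : S, mcpl (condDist π i x) (condDist π i y) (Function.update x i s i, y' i) := by
      rw [Finset.sum_congr rfl (fun x' _ => e1 x')]
      exact sum_off_coord x i (fun x' => mcpl (condDist π i x) (condDist π i y) (x' i, y' i))
    rw [e2]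
    have e3 : ∀ s : S, mcpl (condDist π i x) (condDist π i y) (Function.update x i s i, y' i)
        = mcpl (condDist π i x) (condDist π i y) (s, y' i) := by
      intro s; rw [Function.update_self]
    rw [Finset.sum_congr rfl (fun s _ => e3 s)]
    exact mcpl_marg2 (condDist_isDist hpos i x) (condDist_isDist hpos i y) (y' i)
  · rw [if_neg hc2]
    apply Finset.sum_eq_zero
    intro x' _
    simp [hc2]

lemma gibbs_rowsum (hn : 0 < n) (hpos : ∀ x, 0 < π x) (x : Fin n → S) :
    ∑ x' : Fin n → S, gibbsKernel π x x' = 1 := by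
  unfold gibbsKernel
  rw [← Finset.mul_sum, Finset.sum_comm, Fintype.card_fin]
  trans ((n : ℝ)⁻¹ * ∑ _i : Fin n, (1 : ℝ))
  · congr 1
    apply Finset.sum_congr rfl
    intro i _
    trans (∑ x' : Fin n → S, if ∀ j, j ≠ i → x' j = x j then condDist π i x (x' i) else 0)
    · apply Finset.sum_congr rfl
      intro x' _
      by_cases h : ∀ j, j ≠ i → x' j = x j
      · rw [if_pos h, if_pos h]
      · rw [if_neg h, if_neg h]
    · rw [sum_off_coord x i (fun x' => condDist π i x (x' i))]
      have e3 : ∀ s : S, condDist π i x (Function.update x i s i) = condDist π i x s := by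
        intro s; rw [Function.update_self]
      rw [Finset.sum_congr rfl (fun s _ => e3 s)]
      exact (condDist_isDist hpos i x).2
  · rw [Finset.sum_const, Finset.card_univ, Fintype.card_fin, nsmul_eq_mul, mul_one,
      inv_mul_cancel₀]
    exact_mod_cast hn.ne'

lemma cq_nonneg (hpos : ∀ x, 0 < π x) (x0 y0 : Fin n → S) :
    ∀ t z, 0 ≤ cq π x0 y0 t z := by
  intro t
  induction t with
  | zero =>
    intro z
    unfold cq
    split
    · exact zero_le_one
    · exact le_refl 0
  | succ t ih =>
    intro z
    show 0 ≤ evolve (cQ π) (cq π x0 y0 t) z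
    unfold evolve
    exact Finset.sum_nonneg fun w _ => mul_nonneg (ih w) (cQ_nonneg hpos w z)

lemma cQ_rowsum (hn : 0 < n) (hpos : ∀ x, 0 < π x) (z : (Fin n → S) × (Fin n → S)) :
    ∑ z' : (Fin n → S) × (Fin n → S), cQ π z z' = 1 := by
  rw [Fintype.sum_prod_type]
  have e : ∀ x' : Fin n → S, (∑ y' : Fin n → S, cQ π z (x', y')) = gibbsKernel π z.1 x' := by
    intro x'
    have := cQ_marg2 hpos z.1 z.2 x'
    rwa [Prod.mk.eta] at this
  rw [Finset.sum_congr rfl (fun x' _ => e x')]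
  exact gibbs_rowsum hn hpos z.1

lemma cq_sum (hn : 0 < n) (hpos : ∀ x, 0 < π x) (x0 y0 : Fin n → S) :
    ∀ t, ∑ z, cq π x0 y0 t z = 1 := by
  intro t
  induction t with
  | zero =>
    show (∑ z, if z = (x0, y0) then (1:ℝ) else 0) = 1
    rw [Finset.sum_ite_eq' Finset.univ (x0, y0) (fun _ => (1:ℝ))]
    simp
  | succ t ih =>
    show (∑ z', evolve (cQ π) (cq π x0 y0 t) z') = 1
    unfold evolve
    rw [Finset.sum_comm]
    have e : ∀ z, (∑ z', cq π x0 y0 t z * cQ π z z') = cq π x0 y0 t z := by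
      intro z
      rw [← Finset.mul_sum, cQ_rowsum hn hpos z, mul_one]
    rw [Finset.sum_congr rfl (fun z _ => e z)]
    exact ih

lemma marg1_evolve (hpos : ∀ x, 0 < π x) (q : (Fin n → S) × (Fin n → S) → ℝ) :
    marg1 (evolve (cQ π) q) = evolve (gibbsKernel π) (marg1 q) := by
  funext x'
  show (∑ y', ∑ z, q z * cQ π z (x', y'))
      = ∑ x, (∑ y, q (x, y)) * gibbsKernel π x x'
  rw [Finset.sum_comm]
  have e : ∀ z, (∑ y', q z * cQ π z (x', y')) = q z * gibbsKernel π z.1 x' := by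
    intro z
    rw [← Finset.mul_sum]
    congr 1
    have := cQ_marg2 hpos z.1 z.2 x'
    rwa [Prod.mk.eta] at this
  rw [Finset.sum_congr rfl (fun z _ => e z), Fintype.sum_prod_type]
  apply Finset.sum_congr rfl
  intro x _
  rw [Finset.sum_mul]

lemma marg2_evolve (hpos : ∀ x, 0 < π x) (q : (Fin n → S) × (Fin n → S) → ℝ) :
    marg2 (evolve (cQ π) q) = evolve (gibbsKernel π) (marg2 q) := by
  funext y'
  show (∑ x', ∑ z, q z * cQ π z (x', y'))
      = ∑ y, (∑ x, q (x, y)) * gibbsKernel π y y'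
  rw [Finset.sum_comm]
  have e : ∀ z, (∑ x', q z * cQ π z (x', y')) = q z * gibbsKernel π z.2 y' := by
    intro z
    rw [← Finset.mul_sum]
    congr 1
    have := cQ_marg1' hpos z.1 z.2 y'
    rwa [Prod.mk.eta] at this
  rw [Finset.sum_congr rfl (fun z _ => e z), Fintype.sum_prod_type_right]
  apply Finset.sum_congr rfl
  intro y _
  rw [Finset.sum_mul]

lemma cQ_term_rowsum (hpos : ∀ x, 0 < π x) (k : Fin n) (x y : Fin n → S) :
    ∑ z' : (Fin n → S) × (Fin n → S),
      (if (∀ j, j ≠ k → z'.1 j = x j) ∧ (∀ j, j ≠ k → z'.2 j = y j)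
        then mcpl (condDist π k x) (condDist π k y) (z'.1 k, z'.2 k) else 0) = 1 := by
  rw [Fintype.sum_prod_type]
  have inner : ∀ x' : Fin n → S, (∑ y' : Fin n → S,
      if (∀ j, j ≠ k → x' j = x j) ∧ (∀ j, j ≠ k → y' j = y j)
        then mcpl (condDist π k x) (condDist π k y) (x' k, y' k) else 0)
      = (if (∀ j, j ≠ k → x' j = x j) then condDist π k x (x' k) else 0) := by
    intro x'
    by_cases hc1 : ∀ j, j ≠ k → x' j = x j
    · rw [if_pos hc1]
      have e1 : ∀ y' : Fin n → S,
          (if (∀ j, j ≠ k → x' j = x j) ∧ (∀ j, j ≠ k → y' j = y j)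
            then mcpl (condDist π k x) (condDist π k y) (x' k, y' k) else 0)
          = (if (∀ j, j ≠ k → y' j = y j)
            then mcpl (condDist π k x) (condDist π k y) (x' k, y' k) else 0) := by
        intro y'
        by_cases hc2 : ∀ j, j ≠ k → y' j = y j
        · rw [if_pos ⟨hc1, hc2⟩, if_pos hc2]
        · rw [if_neg (fun h => hc2 h.2), if_neg hc2]
      rw [Finset.sum_congr rfl (fun y' _ => e1 y'),
        sum_off_coord y k (fun y' => mcpl (condDist π k x) (condDist π k y) (x' k, y' k))]
      have e3 : ∀ s : S, mcpl (condDist π k x) (condDist π k y) (x' k, Function.update y k s k)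
          = mcpl (condDist π k x) (condDist π k y) (x' k, s) := by
        intro s; rw [Function.update_self]
      rw [Finset.sum_congr rfl (fun s _ => e3 s)]
      exact mcpl_marg1 (condDist_isDist hpos k x) (condDist_isDist hpos k y) (x' k)
    · rw [if_neg hc1]
      apply Finset.sum_eq_zero
      intro y' _
      exact if_neg (fun h => hc1 h.1)
  rw [Finset.sum_congr rfl (fun x' _ => inner x'),
    sum_off_coord x k (fun x' => condDist π k x (x' k))]
  have e3 : ∀ s : S, condDist π k x (Function.update x k s k) = condDist π k x s := by
    intro s; rw [Function.update_self]
  rw [Finset.sum_congr rfl (fun s _ => e3 s)]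
  exact (condDist_isDist hpos k x).2

lemma cQ_mismatch_le (hn : 0 < n) (hpos : ∀ x, 0 < π x) (i : Fin n) (x y : Fin n → S) :
    ∑ z' ∈ Finset.univ.filter
        (fun z' : (Fin n → S) × (Fin n → S) => z'.1 i ≠ z'.2 i), cQ π (x, y) z'
    ≤ (n : ℝ)⁻¹ * (((n : ℝ) - 1) * (if x i ≠ y i then 1 else 0)
        + ∑ j ∈ Finset.univ.filter (fun j => x j ≠ y j), infl π i j) := by
  rw [Finset.sum_filter]
  have e1 : ∀ z' : (Fin n → S) × (Fin n → S),
      (if z'.1 i ≠ z'.2 i then cQ π (x, y) z' else 0)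
      = (n : ℝ)⁻¹ * ∑ k : Fin n, (if z'.1 i ≠ z'.2 i then
          (if (∀ j, j ≠ k → z'.1 j = x j) ∧ (∀ j, j ≠ k → z'.2 j = y j)
            then mcpl (condDist π k x) (condDist π k y) (z'.1 k, z'.2 k) else 0) else 0) := by
    intro z'
    by_cases h : z'.1 i ≠ z'.2 i
    · rw [if_pos h]
      unfold cQ
      congr 1
      exact Finset.sum_congr rfl (fun k _ => (if_pos h).symm)
    · rw [if_neg h]
      have : ∀ k ∈ Finset.univ, (if z'.1 i ≠ z'.2 i then
          (if (∀ j, j ≠ k → z'.1 j = x j) ∧ (∀ j, j ≠ k → z'.2 j = y j)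
            then mcpl (condDist π k x) (condDist π k y) (z'.1 k, z'.2 k) else 0) else 0)
          = 0 := fun k _ => if_neg h
      rw [Finset.sum_congr rfl this, Finset.sum_const_zero, mul_zero]
  rw [Finset.sum_congr rfl (fun z' _ => e1 z'), ← Finset.mul_sum, Finset.sum_comm]
  -- now goal : n⁻¹ * ∑ k, U k ≤ n⁻¹ * (...)
  apply mul_le_mul_of_nonneg_left ?_ (by positivity)
  rw [← Finset.add_sum_erase Finset.univ _ (Finset.mem_univ i)]
  rw [add_comm (((n:ℝ) - 1) * _)]
  apply add_le_add
  · -- k = i term : bounded by the path sum of influences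
    have e2 : ∀ z' : (Fin n → S) × (Fin n → S),
        (if z'.1 i ≠ z'.2 i then
          (if (∀ j, j ≠ i → z'.1 j = x j) ∧ (∀ j, j ≠ i → z'.2 j = y j)
            then mcpl (condDist π i x) (condDist π i y) (z'.1 i, z'.2 i) else 0) else 0)
        = (if (∀ j, j ≠ i → z'.1 j = x j) ∧ (∀ j, j ≠ i → z'.2 j = y j)
            then (if z'.1 i ≠ z'.2 i
              then mcpl (condDist π i x) (condDist π i y) (z'.1 i, z'.2 i) else 0) else 0) := by
      intro z'
      by_cases h1 : z'.1 i ≠ z'.2 i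
      · by_cases h2 : (∀ j, j ≠ i → z'.1 j = x j) ∧ (∀ j, j ≠ i → z'.2 j = y j)
        · rw [if_pos h1, if_pos h2, if_pos h2, if_pos h1]
        · rw [if_pos h1, if_neg h2, if_neg h2]
      · by_cases h2 : (∀ j, j ≠ i → z'.1 j = x j) ∧ (∀ j, j ≠ i → z'.2 j = y j)
        · rw [if_neg h1, if_pos h2, if_neg h1]
        · rw [if_neg h1, if_neg h2]
    rw [Finset.sum_congr rfl (fun z' _ => e2 z'), Fintype.sum_prod_type]
    have inner : ∀ x' : Fin n → S, (∑ y' : Fin n → S,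
        if (∀ j, j ≠ i → x' j = x j) ∧ (∀ j, j ≠ i → y' j = y j)
          then (if x' i ≠ y' i
            then mcpl (condDist π i x) (condDist π i y) (x' i, y' i) else 0) else 0)
        = (if (∀ j, j ≠ i → x' j = x j) then
            ∑ s' : S, (if x' i ≠ s'
              then mcpl (condDist π i x) (condDist π i y) (x' i, s') else 0) else 0) := by
      intro x'
      by_cases hc1 : ∀ j, j ≠ i → x' j = x j
      · rw [if_pos hc1]
        have e1' : ∀ y' : Fin n → S,
            (if (∀ j, j ≠ i → x' j = x j) ∧ (∀ j, j ≠ i → y' j = y j)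
              then (if x' i ≠ y' i
                then mcpl (condDist π i x) (condDist π i y) (x' i, y' i) else 0) else 0)
            = (if (∀ j, j ≠ i → y' j = y j)
              then (if x' i ≠ y' i
                then mcpl (condDist π i x) (condDist π i y) (x' i, y' i) else 0) else 0) := by
          intro y'
          by_cases hc2 : ∀ j, j ≠ i → y' j = y j
          · rw [if_pos ⟨hc1, hc2⟩, if_pos hc2]
          · rw [if_neg (fun h => hc2 h.2), if_neg hc2]
        rw [Finset.sum_congr rfl (fun y' _ => e1' y'),
          sum_off_coord y i (fun y' => if x' i ≠ y' i
            then mcpl (condDist π i x) (condDist π i y) (x' i, y' i) else 0)]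
        apply Finset.sum_congr rfl
        intro s _
        rw [Function.update_self]
      · rw [if_neg hc1]
        apply Finset.sum_eq_zero
        intro y' _
        exact if_neg (fun h => hc1 h.1)
    rw [Finset.sum_congr rfl (fun x' _ => inner x'),
      sum_off_coord x i (fun x' => ∑ s' : S, if x' i ≠ s'
        then mcpl (condDist π i x) (condDist π i y) (x' i, s') else 0)]
    have e4 : ∀ s : S, (∑ s' : S, if Function.update x i s i ≠ s'
          then mcpl (condDist π i x) (condDist π i y) (Function.update x i s i, s') else 0)
        = ∑ s' : S, (if s ≠ s' then mcpl (condDist π i x) (condDist π i y) (s, s') else 0) := by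
      intro s
      apply Finset.sum_congr rfl
      intro s' _
      rw [Function.update_self]
    rw [Finset.sum_congr rfl (fun s _ => e4 s)]
    have e5 : (∑ s : S, ∑ s' : S,
        if s ≠ s' then mcpl (condDist π i x) (condDist π i y) (s, s') else 0)
        = ∑ p ∈ Finset.univ.filter (fun p : S × S => p.1 ≠ p.2),
            mcpl (condDist π i x) (condDist π i y) p := by
      rw [Finset.sum_filter, Fintype.sum_prod_type]
    rw [e5]
    calc ∑ p ∈ Finset.univ.filter (fun p : S × S => p.1 ≠ p.2),
          mcpl (condDist π i x) (condDist π i y) p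
        ≤ Ddef (condDist π i x) (condDist π i y) :=
          mcpl_offdiag_le (condDist_isDist hpos i x) (condDist_isDist hpos i y)
      _ ≤ tvDist (condDist π i x) (condDist π i y) := Ddef_le_tvDist
      _ ≤ ∑ j ∈ Finset.univ.filter (fun j => x j ≠ y j), infl π i j :=
          tvDist_path_le (condDist π i) (infl π i)
            (fun j u v h => tvDist_le_infl π i j h) x y
  · -- k ≠ i terms
    have ek : ∀ k ∈ Finset.univ.erase i,
        (∑ z' : (Fin n → S) × (Fin n → S), (if z'.1 i ≠ z'.2 i then
          (if (∀ j, j ≠ k → z'.1 j = x j) ∧ (∀ j, j ≠ k → z'.2 j = y j)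
            then mcpl (condDist π k x) (condDist π k y) (z'.1 k, z'.2 k) else 0) else 0))
        = (if x i ≠ y i then 1 else 0) := by
      intro k hk
      have hik : i ≠ k := (Finset.mem_erase.mp hk).1.symm
      have term : ∀ z' : (Fin n → S) × (Fin n → S),
          (if z'.1 i ≠ z'.2 i then
            (if (∀ j, j ≠ k → z'.1 j = x j) ∧ (∀ j, j ≠ k → z'.2 j = y j)
              then mcpl (condDist π k x) (condDist π k y) (z'.1 k, z'.2 k) else 0) else 0)
          = (if x i ≠ y i then
            (if (∀ j, j ≠ k → z'.1 j = x j) ∧ (∀ j, j ≠ k → z'.2 j = y j)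
              then mcpl (condDist π k x) (condDist π k y) (z'.1 k, z'.2 k) else 0) else 0) := by
        intro z'
        by_cases h2 : (∀ j, j ≠ k → z'.1 j = x j) ∧ (∀ j, j ≠ k → z'.2 j = y j)
        · have hx : z'.1 i = x i := h2.1 i hik
          have hy : z'.2 i = y i := h2.2 i hik
          rw [hx, hy]
        · rw [if_neg h2]
          simp
      rw [Finset.sum_congr rfl (fun z' _ => term z')]
      by_cases hm : x i ≠ y i
      · rw [if_pos hm]
        have : ∀ z' : (Fin n → S) × (Fin n → S), (if x i ≠ y i then
            (if (∀ j, j ≠ k → z'.1 j = x j) ∧ (∀ j, j ≠ k → z'.2 j = y j)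
              then mcpl (condDist π k x) (condDist π k y) (z'.1 k, z'.2 k) else 0) else 0)
            = (if (∀ j, j ≠ k → z'.1 j = x j) ∧ (∀ j, j ≠ k → z'.2 j = y j)
              then mcpl (condDist π k x) (condDist π k y) (z'.1 k, z'.2 k) else 0) :=
          fun z' => if_pos hm
        rw [Finset.sum_congr rfl (fun z' _ => this z')]
        exact cQ_term_rowsum hpos k x y
      · rw [if_neg hm]
        apply Finset.sum_eq_zero
        intro z' _
        exact if_neg hm
    rw [Finset.sum_congr rfl ek, Finset.sum_const, Finset.card_erase_of_mem (Finset.mem_univ i),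
      Finset.card_univ, Fintype.card_fin, nsmul_eq_mul]
    rw [Nat.cast_sub hn]
    simp

lemma cq_mismatch_pow (hn : 0 < n) (hpos : ∀ x, 0 < π x) (x0 y0 : Fin n → S)
    (t : ℕ) (i : Fin n) :
    ∑ z ∈ Finset.univ.filter
        (fun z : (Fin n → S) × (Fin n → S) => z.1 i ≠ z.2 i), cq π x0 y0 t z
      ≤ (1 - (1 - totalInfluence π) / n) ^ t := by
  have hn1 : (1:ℝ) ≤ n := by exact_mod_cast hn
  have hnne : (n:ℝ) ≠ 0 := by positivity
  have hα0 : 0 ≤ totalInfluence π := totalInfluence_nonneg hn π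
  have hr0 : 0 ≤ 1 - (1 - totalInfluence π) / n := by
    rw [sub_nonneg, div_le_one (by positivity)]
    linarith
  induction t generalizing i with
  | zero =>
    rw [pow_zero]
    calc ∑ z ∈ Finset.univ.filter
          (fun z : (Fin n → S) × (Fin n → S) => z.1 i ≠ z.2 i), cq π x0 y0 0 z
        ≤ ∑ z, cq π x0 y0 0 z :=
          Finset.sum_le_sum_of_subset_of_nonneg (Finset.filter_subset _ _)
            (fun z _ _ => cq_nonneg hpos x0 y0 0 z)
      _ = 1 := cq_sum hn hpos x0 y0 0
  | succ t ih =>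
    have step : ∑ z ∈ Finset.univ.filter
          (fun z : (Fin n → S) × (Fin n → S) => z.1 i ≠ z.2 i), cq π x0 y0 (t+1) z
        = ∑ z : (Fin n → S) × (Fin n → S), cq π x0 y0 t z *
            ∑ z' ∈ Finset.univ.filter
              (fun z' : (Fin n → S) × (Fin n → S) => z'.1 i ≠ z'.2 i), cQ π z z' := by
      show (∑ z' ∈ Finset.univ.filter
          (fun z' : (Fin n → S) × (Fin n → S) => z'.1 i ≠ z'.2 i),
            ∑ z, cq π x0 y0 t z * cQ π z z') = _
      rw [Finset.sum_comm]
      exact Finset.sum_congr rfl (fun z _ => (Finset.mul_sum _ _ _).symm)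
    rw [step]
    have bound1 : ∀ z : (Fin n → S) × (Fin n → S),
        cq π x0 y0 t z * (∑ z' ∈ Finset.univ.filter
          (fun z' : (Fin n → S) × (Fin n → S) => z'.1 i ≠ z'.2 i), cQ π z z')
        ≤ cq π x0 y0 t z * ((n : ℝ)⁻¹ * (((n:ℝ) - 1) * (if z.1 i ≠ z.2 i then 1 else 0)
            + ∑ j ∈ Finset.univ.filter (fun j => z.1 j ≠ z.2 j), infl π i j)) := by
      intro z
      apply mul_le_mul_of_nonneg_left ?_ (cq_nonneg hpos x0 y0 t z)
      have := cQ_mismatch_le hn hpos i z.1 z.2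
      rwa [Prod.mk.eta] at this
    refine le_trans (Finset.sum_le_sum (fun z _ => bound1 z)) ?_
    have expand : ∀ z : (Fin n → S) × (Fin n → S),
        cq π x0 y0 t z * ((n : ℝ)⁻¹ * (((n:ℝ) - 1) * (if z.1 i ≠ z.2 i then 1 else 0)
            + ∑ j ∈ Finset.univ.filter (fun j => z.1 j ≠ z.2 j), infl π i j))
        = (n : ℝ)⁻¹ * (((n:ℝ) - 1) *
            (cq π x0 y0 t z * (if z.1 i ≠ z.2 i then 1 else 0))
            + cq π x0 y0 t z *
              ∑ j ∈ Finset.univ.filter (fun j => z.1 j ≠ z.2 j), infl π i j) := by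
      intro z; ring
    rw [Finset.sum_congr rfl (fun z _ => expand z), ← Finset.mul_sum]
    have sum_split : (∑ z : (Fin n → S) × (Fin n → S), (((n:ℝ) - 1) *
            (cq π x0 y0 t z * (if z.1 i ≠ z.2 i then 1 else 0))
            + cq π x0 y0 t z *
              ∑ j ∈ Finset.univ.filter (fun j => z.1 j ≠ z.2 j), infl π i j))
        = ((n:ℝ) - 1) * (∑ z : (Fin n → S) × (Fin n → S),
            cq π x0 y0 t z * (if z.1 i ≠ z.2 i then 1 else 0))
          + ∑ z : (Fin n → S) × (Fin n → S), cq π x0 y0 t z *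
              ∑ j ∈ Finset.univ.filter (fun j => z.1 j ≠ z.2 j), infl π i j := by
      rw [Finset.sum_add_distrib, Finset.mul_sum]
    rw [sum_split]
    -- first sum equals the filtered sum
    have S1 : (∑ z : (Fin n → S) × (Fin n → S),
          cq π x0 y0 t z * (if z.1 i ≠ z.2 i then 1 else 0))
        = ∑ z ∈ Finset.univ.filter
            (fun z : (Fin n → S) × (Fin n → S) => z.1 i ≠ z.2 i), cq π x0 y0 t z := by
      rw [Finset.sum_filter]
      apply Finset.sum_congr rfl
      intro z _
      split <;> ring
    have S2 : (∑ z : (Fin n → S) × (Fin n → S), cq π x0 y0 t z *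
          ∑ j ∈ Finset.univ.filter (fun j => z.1 j ≠ z.2 j), infl π i j)
        ≤ totalInfluence π * (1 - (1 - totalInfluence π) / n) ^ t := by
      have e1 : ∀ z : (Fin n → S) × (Fin n → S), cq π x0 y0 t z *
            (∑ j ∈ Finset.univ.filter (fun j => z.1 j ≠ z.2 j), infl π i j)
          = ∑ j : Fin n, (if z.1 j ≠ z.2 j then cq π x0 y0 t z * infl π i j else 0) := by
        intro z
        rw [Finset.sum_filter, Finset.mul_sum]
        apply Finset.sum_congr rfl
        intro j _
        split <;> ring
      rw [Finset.sum_congr rfl (fun z _ => e1 z), Finset.sum_comm]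
      have e2 : ∀ j : Fin n, (∑ z : (Fin n → S) × (Fin n → S),
            (if z.1 j ≠ z.2 j then cq π x0 y0 t z * infl π i j else 0))
          = (∑ z ∈ Finset.univ.filter
              (fun z : (Fin n → S) × (Fin n → S) => z.1 j ≠ z.2 j), cq π x0 y0 t z)
            * infl π i j := by
        intro j
        rw [Finset.sum_mul, Finset.sum_filter]
      rw [Finset.sum_congr rfl (fun j _ => e2 j)]
      calc (∑ j : Fin n, (∑ z ∈ Finset.univ.filter
              (fun z : (Fin n → S) × (Fin n → S) => z.1 j ≠ z.2 j), cq π x0 y0 t z)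
            * infl π i j)
          ≤ ∑ j : Fin n, (1 - (1 - totalInfluence π) / n) ^ t * infl π i j := by
            apply Finset.sum_le_sum
            intro j _
            exact mul_le_mul_of_nonneg_right (ih j) (infl_nonneg π i j)
        _ = (1 - (1 - totalInfluence π) / n) ^ t * ∑ j, infl π i j := by
            rw [Finset.mul_sum]
        _ ≤ (1 - (1 - totalInfluence π) / n) ^ t * totalInfluence π :=
            mul_le_mul_of_nonneg_left (sum_infl_le π i) (pow_nonneg hr0 t)
        _ = totalInfluence π * (1 - (1 - totalInfluence π) / n) ^ t := by ring
    rw [S1]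
    have final : ((n:ℝ))⁻¹ * (((n:ℝ) - 1) * (1 - (1 - totalInfluence π) / n) ^ t
          + totalInfluence π * (1 - (1 - totalInfluence π) / n) ^ t)
        = (1 - (1 - totalInfluence π) / n) ^ (t+1) := by
      rw [pow_succ]
      field_simp
      ring
    calc (n:ℝ)⁻¹ * (((n:ℝ) - 1) * (∑ z ∈ Finset.univ.filter
            (fun z : (Fin n → S) × (Fin n → S) => z.1 i ≠ z.2 i), cq π x0 y0 t z)
          + ∑ z : (Fin n → S) × (Fin n → S), cq π x0 y0 t z *
              ∑ j ∈ Finset.univ.filter (fun j => z.1 j ≠ z.2 j), infl π i j)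
        ≤ (n:ℝ)⁻¹ * (((n:ℝ) - 1) * (1 - (1 - totalInfluence π) / n) ^ t
          + totalInfluence π * (1 - (1 - totalInfluence π) / n) ^ t) := by
          apply mul_le_mul_of_nonneg_left ?_ (by positivity)
          apply add_le_add ?_ S2
          exact mul_le_mul_of_nonneg_left (ih i) (by linarith)
      _ = (1 - (1 - totalInfluence π) / n) ^ (t+1) := final

end Main

/-- for sequential Gibbs sampling on `π` with total influence `α < 1`,
from any pair of initial states there is a coupling of the chains with
`P(X_{i,t} ≠ Y_{i,t}) ≤ exp(−(1−α)t/n)` for every variable `i` and time `t`. -/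
theorem gibbs_coupling_coordinate_bound {n : ℕ} (hn : 0 < n)
    {S : Type*} [Fintype S] [DecidableEq S]
    (π : (Fin n → S) → ℝ) (hπ : IsDist π) (hpos : ∀ x, 0 < π x)
    (hα : totalInfluence π < 1)
    (x0 y0 : Fin n → S) :
    ∃ q : ℕ → (Fin n → S) × (Fin n → S) → ℝ,
      IsChainCoupling (gibbsKernel π) x0 y0 q ∧
      ∀ (i : Fin n) (t : ℕ),
        ∑ z ∈ Finset.univ.filter
            (fun z : (Fin n → S) × (Fin n → S) => z.1 i ≠ z.2 i), q t z ≤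
          Real.exp (-(1 - totalInfluence π) * t / n) := by
  have hSne : Nonempty S := by
    by_contra h
    have hE : IsEmpty S := not_nonempty_iff.mp h
    have hE2 : IsEmpty (Fin n → S) := ⟨fun f => hE.false (f ⟨0, hn⟩)⟩
    have h2 := hπ.2
    rw [Finset.univ_eq_empty, Finset.sum_empty] at h2
    norm_num at h2
  refine ⟨cq π x0 y0, ⟨cq_nonneg hpos x0 y0, cq_sum hn hpos x0 y0, rfl,
    fun t => marg1_evolve hpos (cq π x0 y0 t), fun t => marg2_evolve hpos (cq π x0 y0 t)⟩, ?_⟩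
  intro i t
  refine (cq_mismatch_pow hn hpos x0 y0 t i).trans ?_
  have hα0 : 0 ≤ totalInfluence π := totalInfluence_nonneg hn π
  have hn1 : (1:ℝ) ≤ n := by exact_mod_cast hn
  have hr0 : 0 ≤ 1 - (1 - totalInfluence π) / n := by
    rw [sub_nonneg, div_le_one (by positivity)]
    linarith
  have hle : 1 - (1 - totalInfluence π) / n ≤ Real.exp (-(1 - totalInfluence π) / n) := by
    have h := Real.add_one_le_exp (-(1 - totalInfluence π) / n)
    have e : -(1 - totalInfluence π) / n = -((1 - totalInfluence π) / n) := by ring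
    rw [e] at h ⊢
    linarith
  calc (1 - (1 - totalInfluence π) / n) ^ t
      ≤ (Real.exp (-(1 - totalInfluence π) / n)) ^ t := pow_le_pow_left₀ hr0 hle t
    _ = Real.exp (-(1 - totalInfluence π) * t / n) := by
        rw [← Real.exp_nat_mul]
        congr 1
        ring
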